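/- Let v₁, …, v_n, (e₁,…,e_n), ≺ and (b₁,…,b_n) be as described, and suppose the tuple (e₁,…,e_n) is allowable. Set r_i = ⟨e_i, b_i⟩ and c_i = e_i − r_i b_i; then r_i > 0 and c_i ∈ K_i^≺. For t ∈ [0,1] set e_i^t = (‖e_i‖ / ‖r_i b_i + t c_i‖) · (r_i b_i + t c_i). Then for every t ∈ [0,1] the vectors e₁^t, …, e_n^t are linearly independent with ‖e_i^t‖ = ‖e_i‖ for all i, the tuple (e₁^t,…,e_n^t) is allowable, e_i^1 = e_i, and the vectors e₁^0, …, e_n^0 are pairwise orthogonal. -/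

import Mathlib

variable {V : Type*}

/-- The star of a vertex: the vertex together with its neighbors. -/
def gstar (Γ : SimpleGraph V) (v : V) : Set V :=
  insert v (Γ.neighborSet v)

/-- Vertices `v` and `w` are twist-related if `st(v) ⊆ st(w)` or
`st(w) ⊆ st(v)`. -/
def TwistRelated (Γ : SimpleGraph V) (v w : V) : Prop :=
  gstar Γ v ⊆ gstar Γ w ∨ gstar Γ w ⊆ gstar Γ v

variable {E : Type*} [NormedAddCommGroup E] [InnerProductSpace ℝ E]

/-- `K_i`: the span of the vectors `e k` for which `k = i`, or `k ≠ i` and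
`st(v i) ⊆ st(v k)`. -/
def Kspan (Γ : SimpleGraph V) {n : ℕ} (v : Fin n → V) (e : Fin n → E)
    (i : Fin n) : Submodule ℝ E :=
  Submodule.span ℝ (e '' {k | k = i ∨ (k ≠ i ∧ gstar Γ (v i) ⊆ gstar Γ (v k))})

/-- The tuple `e` is allowable if for all `i`, `j` with `v i`, `v j` not
twist-related, the subspaces `K_i ∩ L_ij^⊥` and `K_j ∩ L_ij^⊥` are orthogonal,
where `L_ij = K_i ∩ K_j`. -/
def Allowable (Γ : SimpleGraph V) {n : ℕ} (v : Fin n → V) (e : Fin n → E) :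
    Prop :=
  ∀ i j : Fin n, ¬ TwistRelated Γ (v i) (v j) →
    ∀ x ∈ Kspan Γ v e i ⊓ (Kspan Γ v e i ⊓ Kspan Γ v e j)ᗮ,
      ∀ y ∈ Kspan Γ v e j ⊓ (Kspan Γ v e i ⊓ Kspan Γ v e j)ᗮ,
        (inner ℝ x y : ℝ) = 0

/-- `K_i^≺`: the span of the vectors `e k` with `k ≠ i`, `st(v i) ⊆ st(v k)`
and `i ≺ k`. -/
def KprecSpan (Γ : SimpleGraph V) {n : ℕ} (v : Fin n → V) (e : Fin n → E)
    (prec : Fin n → Fin n → Prop) (i : Fin n) : Submodule ℝ E :=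
  Submodule.span ℝ
    (e '' {k | k ≠ i ∧ gstar Γ (v i) ⊆ gstar Γ (v k) ∧ prec i k})

/-- The straightening path: with `r i = ⟪e i, b i⟫` and `c i = e i - r i • b i`,
`shearPath e b t i` is the vector `r i • b i + t • c i` rescaled to have the
same norm as `e i`. -/
noncomputable def shearPath {n : ℕ} (e b : Fin n → E) (t : ℝ) (i : Fin n) : E :=
  (‖e i‖ / ‖(inner ℝ (e i) (b i) : ℝ) • b i + t • (e i - (inner ℝ (e i) (b i) : ℝ) • b i)‖) •
    ((inner ℝ (e i) (b i) : ℝ) • b i + t • (e i - (inner ℝ (e i) (b i) : ℝ) • b i))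

lemma aux_span_inter {ι : Type*} {e : ι → E} (he : LinearIndependent ℝ e) (s t : Set ι) :
    Submodule.span ℝ (e '' s) ⊓ Submodule.span ℝ (e '' t) ≤ Submodule.span ℝ (e '' (s ∩ t)) := by
  intro x hx
  obtain ⟨hxs, hxt⟩ := hx
  have hsplit : Submodule.span ℝ (e '' s) ≤
      Submodule.span ℝ (e '' (s ∩ t)) ⊔ Submodule.span ℝ (e '' (s \ t)) := by
    rw [← Submodule.span_union, ← Set.image_union]
    refine Submodule.span_mono (Set.image_mono ?_)
    intro k hk
    by_cases h : k ∈ t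
    · exact Or.inl ⟨hk, h⟩
    · exact Or.inr ⟨hk, h⟩
  obtain ⟨a, ha, c, hc, hac⟩ := Submodule.mem_sup.mp (hsplit hxs)
  have hat : a ∈ Submodule.span ℝ (e '' t) :=
    Submodule.span_mono (Set.image_mono Set.inter_subset_right) ha
  have hc2 : c ∈ Submodule.span ℝ (e '' t) := by
    have : c = x - a := by rw [← hac]; abel
    rw [this]
    exact Submodule.sub_mem _ hxt hat
  have hdis := he.disjoint_span_image (s := s \ t) (t := t) Set.disjoint_sdiff_left
  have hc0 : c = 0 := Submodule.disjoint_def.mp hdis c hc hc2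
  rw [← hac, hc0, add_zero]
  exact ha

lemma aux_mem_span_tri {n : ℕ} {e w : Fin n → E}
    {prec : Fin n → Fin n → Prop} (hso : IsStrictTotalOrder (Fin n) prec)
    (S : Set (Fin n)) (P : Submodule ℝ E)
    (hwP : ∀ k ∈ S, w k ∈ P)
    (h : ∀ k ∈ S, ∃ d : ℝ, d ≠ 0 ∧
      w k - d • e k ∈ Submodule.span ℝ (e '' {m | m ∈ S ∧ prec k m})) :
    ∀ k ∈ S, e k ∈ P := by
  haveI h1 : IsTrans (Fin n) prec := hso.toIsStrictOrder.toIsTrans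
  haveI h2 : IsIrrefl (Fin n) prec := hso.toIsStrictOrder.toIrrefl
  haveI := IsTrans.swap prec
  haveI := Std.Irrefl.swap prec
  have hwf : WellFounded (Function.swap prec) :=
    Finite.wellFounded_of_trans_of_irrefl (Function.swap prec)
  intro k
  refine hwf.induction (C := fun k => k ∈ S → e k ∈ P) k ?_
  intro k IH hk
  obtain ⟨d, hd, hu⟩ := h k hk
  have hsub : Submodule.span ℝ (e '' {m | m ∈ S ∧ prec k m}) ≤ P := by
    rw [Submodule.span_le]
    rintro _ ⟨m, ⟨hmS, hmp⟩, rfl⟩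
    exact IH m hmp hmS
  have heq : e k = d⁻¹ • (w k - (w k - d • e k)) := by
    rw [sub_sub_cancel, smul_smul, inv_mul_cancel₀ hd, one_smul]
  rw [heq]
  exact Submodule.smul_mem _ _ (Submodule.sub_mem _ (hwP k hk) (hsub hu))

lemma aux_li_tri {n : ℕ} {e w : Fin n → E} (he : LinearIndependent ℝ e)
    {prec : Fin n → Fin n → Prop} (hso : IsStrictTotalOrder (Fin n) prec)
    (h : ∀ k, ∃ d : ℝ, d ≠ 0 ∧
      w k - d • e k ∈ Submodule.span ℝ (e '' {m | prec k m})) :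
    LinearIndependent ℝ w := by
  have hwe : ∀ k, w k ∈ Submodule.span ℝ (Set.range e) := by
    intro k
    obtain ⟨d, hd, hu⟩ := h k
    have h1 : w k = (w k - d • e k) + d • e k := by abel
    rw [h1]
    exact Submodule.add_mem _
      (Submodule.span_mono (Set.image_subset_range _ _) hu)
      (Submodule.smul_mem _ _ (Submodule.subset_span ⟨k, rfl⟩))
  have hew : ∀ k, e k ∈ Submodule.span ℝ (Set.range w) := by
    have hmain := aux_mem_span_tri (e := e) (w := w) hso Set.univ
      (Submodule.span ℝ (Set.range w))
      (fun k _ => Submodule.subset_span ⟨k, rfl⟩)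
      (fun k _ => by
        obtain ⟨d, hd, hu⟩ := h k
        refine ⟨d, hd, Submodule.span_mono (Set.image_mono ?_) hu⟩
        intro m hm
        exact ⟨Set.mem_univ m, hm⟩)
    exact fun k => hmain k (Set.mem_univ k)
  have hspan : Submodule.span ℝ (Set.range w) = Submodule.span ℝ (Set.range e) := by
    apply le_antisymm
    · rw [Submodule.span_le]; rintro _ ⟨k, rfl⟩; exact hwe k
    · rw [Submodule.span_le]; rintro _ ⟨k, rfl⟩; exact hew k
  rw [linearIndependent_iff_card_eq_finrank_span] at he ⊢
  unfold Set.finrank at he ⊢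
  rw [hspan]
  exact he

/-- Straightening an allowable tuple: with notation as in the previous
statement, for an allowable tuple `e` we have `r i > 0` and `c i ∈ K_i^≺`; for
every `t ∈ [0,1]` the tuple `e^t = shearPath e b t` is linearly independent,
norm-preserving and allowable; `e^1 = e`; and the vectors `e^0 i` are pairwise
orthogonal. -/
theorem stmt_12 [Fintype V] (Γ : SimpleGraph V) {n : ℕ} (v : Fin n → V)
    (hvinj : Function.Injective v)
    (hadj : ∀ i j : Fin n, i ≠ j → Γ.Adj (v i) (v j))
    (e : Fin n → E) (he : LinearIndependent ℝ e)
    (prec : Fin n → Fin n → Prop) (hso : IsStrictTotalOrder (Fin n) prec)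
    (hprec : ∀ i j : Fin n, Γ.neighborSet (v i) ⊆ gstar Γ (v j) →
      ¬ Γ.neighborSet (v j) ⊆ gstar Γ (v i) → prec i j)
    (b : Fin n → E)
    (hb_norm : ∀ i, ‖b i‖ = 1)
    (hb_mem : ∀ i, b i ∈ KprecSpan Γ v e prec i ⊔ Submodule.span ℝ {e i})
    (hb_orth : ∀ i, ∀ x ∈ KprecSpan Γ v e prec i, (inner ℝ (b i) x : ℝ) = 0)
    (hb_pos : ∀ i, 0 < (inner ℝ (e i) (b i) : ℝ))
    (hA : Allowable Γ v e) :
    (∀ i, 0 < (inner ℝ (e i) (b i) : ℝ)) ∧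
    (∀ i, e i - (inner ℝ (e i) (b i) : ℝ) • b i ∈ KprecSpan Γ v e prec i) ∧
    (∀ t : ℝ, t ∈ Set.Icc (0 : ℝ) 1 →
      LinearIndependent ℝ (shearPath e b t) ∧
      (∀ i, ‖shearPath e b t i‖ = ‖e i‖) ∧
      Allowable Γ v (shearPath e b t)) ∧
    (∀ i, shearPath e b 1 i = e i) ∧
    (∀ i j : Fin n, i ≠ j →
      (inner ℝ (shearPath e b 0 i) (shearPath e b 0 j) : ℝ) = 0) := by
  classical
  have hei_ne : ∀ i, e i ≠ 0 := fun i => he.ne_zero i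
  have hbb_self : ∀ i, (inner ℝ (b i) (b i) : ℝ) = 1 := by
    intro i; rw [real_inner_self_eq_norm_mul_norm, hb_norm i, mul_one]
  -- decomposition of b i
  have hdecomp : ∀ i, ∃ y ∈ KprecSpan Γ v e prec i, ∃ α : ℝ,
      (inner ℝ (e i) (b i) : ℝ) * α = 1 ∧ b i = y + α • e i := by
    intro i
    obtain ⟨y, hy, z, hz, hyz⟩ := Submodule.mem_sup.mp (hb_mem i)
    obtain ⟨α, rfl⟩ := Submodule.mem_span_singleton.mp hz
    refine ⟨y, hy, α, ?_, hyz.symm⟩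
    have h2 : (inner ℝ (b i) y : ℝ) = 0 := hb_orth i y hy
    have h3 : (inner ℝ (b i) (e i) : ℝ) = (inner ℝ (e i) (b i) : ℝ) := real_inner_comm _ _
    have hcalc : (1:ℝ) = α * (inner ℝ (e i) (b i) : ℝ) := by
      calc (1:ℝ) = inner ℝ (b i) (b i) := (hbb_self i).symm
        _ = inner ℝ (b i) (y + α • e i) := by rw [hyz]
        _ = inner ℝ (b i) y + α * (inner ℝ (b i) (e i) : ℝ) := by
            rw [inner_add_right, real_inner_smul_right]
        _ = α * (inner ℝ (e i) (b i) : ℝ) := by rw [h2, h3, zero_add]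
    linarith [hcalc, mul_comm α (inner ℝ (e i) (b i) : ℝ)]
  have hrb : ∀ (i : Fin n) (y : E) (α : ℝ), (inner ℝ (e i) (b i) : ℝ) * α = 1 →
      b i = y + α • e i →
      (inner ℝ (e i) (b i) : ℝ) • b i = e i + (inner ℝ (e i) (b i) : ℝ) • y := by
    intro i y α hα hbi
    generalize hR : (inner ℝ (e i) (b i) : ℝ) = R at hα ⊢
    rw [hbi, smul_add, smul_smul, hα, one_smul, add_comm]
  have hc_mem : ∀ i, e i - (inner ℝ (e i) (b i) : ℝ) • b i ∈ KprecSpan Γ v e prec i := by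
    intro i
    obtain ⟨y, hy, α, hα, hbi⟩ := hdecomp i
    have heq : e i - (inner ℝ (e i) (b i) : ℝ) • b i = -((inner ℝ (e i) (b i) : ℝ) • y) := by
      rw [hrb i y α hα hbi]
      abel
    rw [heq]
    exact Submodule.neg_mem _ (Submodule.smul_mem _ _ hy)
  have hcb : ∀ i, (inner ℝ (b i) (e i - (inner ℝ (e i) (b i) : ℝ) • b i) : ℝ) = 0 :=
    fun i => hb_orth i _ (hc_mem i)
  have hshear : ∀ (t : ℝ) (i : Fin n), shearPath e b t i =
      (‖e i‖ / ‖(inner ℝ (e i) (b i) : ℝ) • b i + t • (e i - (inner ℝ (e i) (b i) : ℝ) • b i)‖) •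
      ((inner ℝ (e i) (b i) : ℝ) • b i + t • (e i - (inner ℝ (e i) (b i) : ℝ) • b i)) :=
    fun t i => rfl
  have hg_ne : ∀ (t : ℝ) (i : Fin n),
      (inner ℝ (e i) (b i) : ℝ) • b i + t • (e i - (inner ℝ (e i) (b i) : ℝ) • b i) ≠ 0 := by
    intro t i h0
    have hcomp : (inner ℝ (b i) ((inner ℝ (e i) (b i) : ℝ) • b i
        + t • (e i - (inner ℝ (e i) (b i) : ℝ) • b i)) : ℝ) = (inner ℝ (e i) (b i) : ℝ) := by
      rw [inner_add_right, real_inner_smul_right, real_inner_smul_right, hbb_self i, hcb i]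
      ring
    rw [h0, inner_zero_right] at hcomp
    exact absurd hcomp.symm (ne_of_gt (hb_pos i))
  have hgnorm_ne : ∀ (t : ℝ) (i : Fin n),
      ‖(inner ℝ (e i) (b i) : ℝ) • b i + t • (e i - (inner ℝ (e i) (b i) : ℝ) • b i)‖ ≠ 0 :=
    fun t i => norm_ne_zero_iff.mpr (hg_ne t i)
  have hnorm : ∀ (t : ℝ) (i : Fin n), ‖shearPath e b t i‖ = ‖e i‖ := by
    intro t i
    rw [hshear, norm_smul, Real.norm_eq_abs,
      abs_of_nonneg (div_nonneg (norm_nonneg _) (norm_nonneg _)),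
      div_mul_cancel₀ _ (hgnorm_ne t i)]
  -- the triangular representation of shearPath
  have hW : ∀ (t : ℝ) (i : Fin n), ∃ d : ℝ, d ≠ 0 ∧
      shearPath e b t i - d • e i ∈ KprecSpan Γ v e prec i := by
    intro t i
    obtain ⟨y, hy, α, hα, hbi⟩ := hdecomp i
    refine ⟨‖e i‖ / ‖(inner ℝ (e i) (b i) : ℝ) • b i + t • (e i - (inner ℝ (e i) (b i) : ℝ) • b i)‖,
      div_ne_zero (norm_ne_zero_iff.mpr (hei_ne i)) (hgnorm_ne t i), ?_⟩
    have heq : shearPath e b t i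
        - (‖e i‖ / ‖(inner ℝ (e i) (b i) : ℝ) • b i + t • (e i - (inner ℝ (e i) (b i) : ℝ) • b i)‖) • e i
        = (‖e i‖ / ‖(inner ℝ (e i) (b i) : ℝ) • b i + t • (e i - (inner ℝ (e i) (b i) : ℝ) • b i)‖) •
          ((inner ℝ (e i) (b i) : ℝ) • y + t • (e i - (inner ℝ (e i) (b i) : ℝ) • b i)) := by
      rw [hshear, ← smul_sub]
      congr 1
      generalize (e i - (inner ℝ (e i) (b i) : ℝ) • b i) = c
      rw [hrb i y α hα hbi]
      abel
    rw [heq]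
    exact Submodule.smul_mem _ _ (Submodule.add_mem _
      (Submodule.smul_mem _ _ hy) (Submodule.smul_mem _ _ (hc_mem i)))
  -- strict order facts
  have ptrans : ∀ {i j k : Fin n}, prec i j → prec j k → prec i k :=
    fun h1 h2 => hso.toIsStrictOrder.toIsTrans.trans _ _ _ h1 h2
  have pirrefl : ∀ i : Fin n, ¬ prec i i := fun i => hso.toIsStrictOrder.toIrrefl.irrefl i
  have pasymm : ∀ {i j : Fin n}, prec i j → ¬ prec j i := fun h1 h2 => pirrefl _ (ptrans h1 h2)
  have pne : ∀ {i j : Fin n}, prec i j → i ≠ j := by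
    intro i j h heq; subst heq; exact pirrefl _ h
  have ptri : ∀ i j : Fin n, i ≠ j → prec i j ∨ prec j i := by
    intro i j hij
    rcases @trichotomous_of _ prec hso.toTrichotomous i j with h | h | h
    · exact Or.inl h
    · exact absurd h hij
    · exact Or.inr h
  -- graph facts
  have hstar_mem : ∀ i j : Fin n, i ≠ j → v j ∈ gstar Γ (v i) := by
    intro i j h
    exact Set.mem_insert_iff.mpr (Or.inr ((Γ.mem_neighborSet _ _).mpr (hadj i j h)))
  have hprec' : ∀ i j : Fin n, i ≠ j → gstar Γ (v i) ⊆ gstar Γ (v j) →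
      ¬ gstar Γ (v j) ⊆ gstar Γ (v i) → prec i j := by
    intro i j hij h1 h2
    apply hprec i j
    · intro x hx
      exact h1 (Set.mem_insert_iff.mpr (Or.inr hx))
    · intro hlk
      apply h2
      intro x hx
      rcases Set.mem_insert_iff.mp hx with h | h
      · rw [h]; exact hstar_mem i j hij
      · exact hlk h
  -- the key orthogonality of the b's
  have hKprec_le : ∀ i j : Fin n, gstar Γ (v i) ⊆ gstar Γ (v j) → prec i j →
      KprecSpan Γ v e prec j ⊔ Submodule.span ℝ {e j} ≤ KprecSpan Γ v e prec i := by
    intro i j hst hp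
    apply sup_le
    · refine Submodule.span_mono (Set.image_mono ?_)
      rintro k ⟨hkj, hstk, hpk⟩
      have hik : prec i k := ptrans hp hpk
      exact ⟨(pne hik).symm, hst.trans hstk, hik⟩
    · rw [Submodule.span_singleton_le_iff_mem]
      exact Submodule.subset_span ⟨j, ⟨(pne hp).symm, hst, hp⟩, rfl⟩
  have hKprec_le_K : ∀ i, KprecSpan Γ v e prec i ⊔ Submodule.span ℝ {e i} ≤ Kspan Γ v e i := by
    intro i
    apply sup_le
    · refine Submodule.span_mono (Set.image_mono ?_)
      rintro k ⟨hk1, hk2, _⟩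
      exact Or.inr ⟨hk1, hk2⟩
    · rw [Submodule.span_singleton_le_iff_mem]
      exact Submodule.subset_span ⟨i, Or.inl rfl, rfl⟩
  have hbb : ∀ i j : Fin n, i ≠ j → (inner ℝ (b i) (b j) : ℝ) = 0 := by
    have key : ∀ i j : Fin n, gstar Γ (v i) ⊆ gstar Γ (v j) → prec i j →
        (inner ℝ (b i) (b j) : ℝ) = 0 :=
      fun i j hst hp => hb_orth i (b j) (hKprec_le i j hst hp (hb_mem j))
    intro i j hij
    by_cases hTR : TwistRelated Γ (v i) (v j)
    · rcases ptri i j hij with hp | hp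
      · refine key i j ?_ hp
        by_contra hst
        rcases hTR with h | h
        · exact hst h
        · exact pasymm hp (hprec' j i hij.symm h hst)
      · rw [real_inner_comm]
        refine key j i ?_ hp
        by_contra hst
        rcases hTR with h | h
        · exact pasymm hp (hprec' i j hij h hst)
        · exact hst h
    · -- non-twist-related: use allowability
      have hTRs : ¬ TwistRelated Γ (v j) (v i) := fun h => hTR h.symm
      have hsub_i : ({k | k = i ∨ (k ≠ i ∧ gstar Γ (v i) ⊆ gstar Γ (v k))} ∩
          {k | k = j ∨ (k ≠ j ∧ gstar Γ (v j) ⊆ gstar Γ (v k))} : Set (Fin n)) ⊆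
          {k | k ≠ i ∧ gstar Γ (v i) ⊆ gstar Γ (v k) ∧ prec i k} := by
        rintro k ⟨hki, hkj⟩
        have hkni : k ≠ i := by
          rintro rfl
          rcases hkj with h' | ⟨_, h'⟩
          · exact hij h'
          · exact hTR (Or.inr h')
        have hknj : k ≠ j := by
          rintro rfl
          rcases hki with h' | ⟨_, h'⟩
          · exact hij h'.symm
          · exact hTR (Or.inl h')
        obtain ⟨_, hstik⟩ := hki.resolve_left hkni
        obtain ⟨_, hstjk⟩ := hkj.resolve_left hknj
        refine ⟨hkni, hstik, hprec' i k (Ne.symm hkni) hstik ?_⟩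
        intro hski
        exact hTR (Or.inr (hstjk.trans hski))
      have hsub_j : ({k | k = i ∨ (k ≠ i ∧ gstar Γ (v i) ⊆ gstar Γ (v k))} ∩
          {k | k = j ∨ (k ≠ j ∧ gstar Γ (v j) ⊆ gstar Γ (v k))} : Set (Fin n)) ⊆
          {k | k ≠ j ∧ gstar Γ (v j) ⊆ gstar Γ (v k) ∧ prec j k} := by
        rintro k ⟨hki, hkj⟩
        have hkni : k ≠ i := by
          rintro rfl
          rcases hkj with h' | ⟨_, h'⟩
          · exact hij h'
          · exact hTR (Or.inr h')
        have hknj : k ≠ j := by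
          rintro rfl
          rcases hki with h' | ⟨_, h'⟩
          · exact hij h'.symm
          · exact hTR (Or.inl h')
        obtain ⟨_, hstik⟩ := hki.resolve_left hkni
        obtain ⟨_, hstjk⟩ := hkj.resolve_left hknj
        refine ⟨hknj, hstjk, hprec' j k (Ne.symm hknj) hstjk ?_⟩
        intro hskj
        exact hTR (Or.inl (hstik.trans hskj))
      have hL_le_i : Kspan Γ v e i ⊓ Kspan Γ v e j ≤ KprecSpan Γ v e prec i :=
        le_trans (aux_span_inter he _ _) (Submodule.span_mono (Set.image_mono hsub_i))
      have hL_le_j : Kspan Γ v e i ⊓ Kspan Γ v e j ≤ KprecSpan Γ v e prec j :=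
        le_trans (aux_span_inter he _ _) (Submodule.span_mono (Set.image_mono hsub_j))
      have hbi_mem : b i ∈ Kspan Γ v e i := hKprec_le_K i (hb_mem i)
      have hbj_mem : b j ∈ Kspan Γ v e j := hKprec_le_K j (hb_mem j)
      have hbi_perp : b i ∈ (Kspan Γ v e i ⊓ Kspan Γ v e j)ᗮ := by
        rw [Submodule.mem_orthogonal]
        intro u hu
        rw [real_inner_comm]
        exact hb_orth i u (hL_le_i hu)
      have hbj_perp : b j ∈ (Kspan Γ v e i ⊓ Kspan Γ v e j)ᗮ := by
        rw [Submodule.mem_orthogonal]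
        intro u hu
        rw [real_inner_comm]
        exact hb_orth j u (hL_le_j hu)
      exact hA i j hTR (b i) ⟨hbi_mem, hbi_perp⟩ (b j) ⟨hbj_mem, hbj_perp⟩
  -- Kspan is unchanged along the path
  have hKeq : ∀ (t : ℝ) (i : Fin n), Kspan Γ v (shearPath e b t) i = Kspan Γ v e i := by
    intro t i
    have hSsub : ∀ k ∈ {k | k = i ∨ (k ≠ i ∧ gstar Γ (v i) ⊆ gstar Γ (v k))},
        ({m | m ≠ k ∧ gstar Γ (v k) ⊆ gstar Γ (v m) ∧ prec k m} : Set (Fin n)) ⊆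
        {m | m = i ∨ (m ≠ i ∧ gstar Γ (v i) ⊆ gstar Γ (v m))} := by
      rintro k hk m ⟨hmk, hstm, _⟩
      by_cases hmi : m = i
      · exact Or.inl hmi
      · refine Or.inr ⟨hmi, ?_⟩
        rcases hk with rfl | ⟨_, hsti⟩
        · exact hstm
        · exact hsti.trans hstm
    apply le_antisymm
    · refine Submodule.span_le.mpr ?_
      rintro _ ⟨k, hk, rfl⟩
      obtain ⟨d, _, hm⟩ := hW t k
      have h1 : shearPath e b t k = d • e k + (shearPath e b t k - d • e k) := by abel
      rw [h1]
      refine Submodule.add_mem _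
        (Submodule.smul_mem _ _ (Submodule.subset_span ⟨k, hk, rfl⟩)) ?_
      exact Submodule.span_mono (Set.image_mono (hSsub k hk)) hm
    · refine Submodule.span_le.mpr ?_
      rintro _ ⟨k, hk, rfl⟩
      refine aux_mem_span_tri hso
        {k | k = i ∨ (k ≠ i ∧ gstar Γ (v i) ⊆ gstar Γ (v k))}
        (Kspan Γ v (shearPath e b t) i)
        (fun k hk => Submodule.subset_span ⟨k, hk, rfl⟩) ?_ k hk
      intro k hk
      obtain ⟨d, hd, hm⟩ := hW t k
      refine ⟨d, hd, Submodule.span_mono (Set.image_mono ?_) hm⟩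
      rintro m ⟨hmk, hstm, hpm⟩
      exact ⟨hSsub k hk ⟨hmk, hstm, hpm⟩, hpm⟩
  -- value at t = 0
  have h0 : ∀ i, shearPath e b 0 i = ‖e i‖ • b i := by
    intro i
    rw [hshear, zero_smul, add_zero, norm_smul, Real.norm_eq_abs,
      abs_of_pos (hb_pos i), hb_norm i, mul_one, smul_smul,
      div_mul_cancel₀ _ (ne_of_gt (hb_pos i))]
  refine ⟨hb_pos, hc_mem, ?_, ?_, ?_⟩
  · intro t _
    refine ⟨?_, fun i => hnorm t i, ?_⟩
    · refine aux_li_tri he hso ?_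
      intro k
      obtain ⟨d, hd, hm⟩ := hW t k
      refine ⟨d, hd, Submodule.span_mono (Set.image_mono ?_) hm⟩
      rintro m ⟨_, _, hpm⟩
      exact hpm
    · intro i j hT x hx y hy
      rw [hKeq t i, hKeq t j] at hx hy
      exact hA i j hT x hx y hy
  · intro i
    have h1 : (inner ℝ (e i) (b i) : ℝ) • b i
        + (1:ℝ) • (e i - (inner ℝ (e i) (b i) : ℝ) • b i) = e i := by
      rw [one_smul]; abel
    rw [hshear, h1, div_self (norm_ne_zero_iff.mpr (hei_ne i)), one_smul]
  · intro i j hij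
    rw [h0 i, h0 j, real_inner_smul_left, real_inner_smul_right, hbb i j hij,
      mul_zero, mul_zero]
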